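/- For ω > 0 and -2√ω < c < 2√ω, the momentum of the soliton profile is P(φ_{ω,c}) = (1/2)Im∫_ℝ φ_{ω,c}·conj(∂_x φ_{ω,c}) dx = √(4ω - c²). -/

import Mathlib

/-- The real soliton profile `ϕ_{ω,c}` of the derivative NLS. -/
noncomputable def varphi (ω c x : ℝ) : ℝ :=
  (Real.sqrt ω / (4 * ω - c ^ 2)
      * (Real.cosh (x * Real.sqrt (4 * ω - c ^ 2)) - c / (2 * Real.sqrt ω)))
    ^ (-(1 / 2 : ℝ))

/-- The complex soliton profile
`φ_{ω,c}(x) = ϕ(x)·exp(i((c/2)x - (1/4)∫_{-∞}^x ϕ²))`. -/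
noncomputable def solProfile (ω c : ℝ) (x : ℝ) : ℂ :=
  ((varphi ω c x : ℝ) : ℂ) *
    Complex.exp (Complex.I *
      (((c / 2) * x - (1 / 4) * ∫ ξ in Set.Iic x, (varphi ω c ξ) ^ 2 : ℝ) : ℂ))

open Real Filter MeasureTheory intervalIntegral Set

lemma tanh_tendsto_atTop : Tendsto (fun y : ℝ => Real.sinh y / Real.cosh y) atTop (nhds 1) := by
  have h : ∀ y : ℝ, Real.sinh y / Real.cosh y
      = (1 - Real.exp (-(2*y))) / (1 + Real.exp (-(2*y))) := by
    intro y
    rw [Real.sinh_eq, Real.cosh_eq]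
    have h1 : Real.exp y * Real.exp (-y) = 1 := by rw [← Real.exp_add]; simp
    have h2 : Real.exp (-(2*y)) = Real.exp (-y) * Real.exp (-y) := by
      rw [← Real.exp_add]; ring_nf
    have h3 : 0 < Real.exp y + Real.exp (-y) :=
      add_pos (Real.exp_pos _) (Real.exp_pos _)
    have h4 : 0 < 1 + Real.exp (-(2*y)) := by positivity
    field_simp
    rw [show -(y*2) = -(2*y) by ring, h2]; linear_combination (2*Real.exp (-y)) * h1
  simp only [h]
  have hexp : Tendsto (fun y : ℝ => Real.exp (-(2*y))) atTop (nhds 0) := by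
    apply Real.tendsto_exp_neg_atTop_nhds_zero.comp
    exact Tendsto.const_mul_atTop two_pos tendsto_id
  have hnum : Tendsto (fun y : ℝ => 1 - Real.exp (-(2*y))) atTop (nhds 1) := by
    simpa using tendsto_const_nhds.sub hexp
  have hden : Tendsto (fun y : ℝ => 1 + Real.exp (-(2*y))) atTop (nhds 1) := by
    simpa using tendsto_const_nhds.add hexp
  simpa [Pi.div_def] using hnum.div hden one_ne_zero

lemma tanh_tendsto_atBot : Tendsto (fun y : ℝ => Real.sinh y / Real.cosh y) atBot (nhds (-1)) := by
  have := (tanh_tendsto_atTop.neg).comp tendsto_neg_atBot_atTop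
  simp only [Function.comp_def] at this
  refine this.congr (fun y => ?_)
  rw [Real.sinh_neg, Real.cosh_neg]; ring

lemma inv_cosh_tendsto_atTop : Tendsto (fun y : ℝ => 1 / Real.cosh y) atTop (nhds 0) := by
  simp only [one_div]
  apply Tendsto.inv_tendsto_atTop
  apply tendsto_atTop_mono (fun y => ?_) (tendsto_exp_atTop.atTop_div_const two_pos)
  rw [Real.cosh_eq]
  have := Real.exp_pos (-y); linarith

lemma inv_cosh_tendsto_atBot : Tendsto (fun y : ℝ => 1 / Real.cosh y) atBot (nhds 0) := by
  have := inv_cosh_tendsto_atTop.comp tendsto_neg_atBot_atTop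
  simp only [Function.comp_def] at this
  refine this.congr (fun y => ?_)
  rw [Real.cosh_neg]

lemma integrable_of_even {f : ℝ → ℝ} (he : ∀ x, f (-x) = f x)
    (h : IntegrableOn f (Set.Ioi (0:ℝ))) (hc : Continuous f) : Integrable f := by
  have h2 : IntegrableOn f (Set.Ici (0:ℝ)) := by
    rw [← Set.Ioi_union_left (a := (0:ℝ)), integrableOn_union]
    exact ⟨h, (integrableOn_singleton_iff (f := f) (x := 0)).2 (Or.inr (by simp))⟩
  have h3 : IntegrableOn (f ∘ Neg.neg) (Neg.neg ⁻¹' (Set.Ici (0:ℝ))) :=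
    (MeasurePreserving.integrableOn_comp_preimage
      (Measure.measurePreserving_neg (volume : Measure ℝ))
      (Homeomorph.neg ℝ).measurableEmbedding).2 h2
  have h4 : IntegrableOn f (Set.Iic (0:ℝ)) := by
    have : (Neg.neg ⁻¹' (Set.Ici (0:ℝ)) : Set ℝ) = Set.Iic 0 := by
      ext x; simp
    rw [this] at h3
    refine h3.congr_fun (fun x _ => ?_) measurableSet_Iic
    simp [Function.comp, he]
  have : IntegrableOn f (Set.Iic 0 ∪ Set.Ioi 0) := (integrableOn_union).2 ⟨h4, h⟩
  rwa [Set.Iic_union_Ioi, integrableOn_univ] at this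

lemma hasDerivAt_F (a b k g : ℝ) (ha : 0 < a) (hb : |b| < a)
    (hg2 : g^2 * (a - b) = a + b) (hkg : k = 2*g*(a-b)) (x : ℝ) :
    HasDerivAt (fun x => 4 * Real.arctan (g * (Real.sinh (x*k/2) / Real.cosh (x*k/2))))
      (k^2 / (a * Real.cosh (x*k) - b)) x := by
  have hb1 : -a < b := (abs_lt.1 hb).1
  have hb2 : b < a := (abs_lt.1 hb).2
  set y := x*k/2 with hy
  have hch : 0 < Real.cosh y := Real.cosh_pos y
  have hlin : HasDerivAt (fun x : ℝ => x*k/2) (k/2) x := by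
    simpa using ((hasDerivAt_id x).mul_const k).div_const 2
  have hs : HasDerivAt (fun x : ℝ => Real.sinh (x*k/2)) (Real.cosh y * (k/2)) x :=
    by have := (Real.hasDerivAt_sinh y).comp x hlin; exact this
  have hc : HasDerivAt (fun x : ℝ => Real.cosh (x*k/2)) (Real.sinh y * (k/2)) x :=
    by have := (Real.hasDerivAt_cosh y).comp x hlin; exact this
  have hq : HasDerivAt (fun x : ℝ => Real.sinh (x*k/2) / Real.cosh (x*k/2))
      ((Real.cosh y * (k/2) * Real.cosh y - Real.sinh y * (Real.sinh y * (k/2)))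
        / (Real.cosh y)^2) x := hs.div hc (ne_of_gt hch)
  have hu := hq.const_mul g
  have harc := (Real.hasDerivAt_arctan (g * (Real.sinh y / Real.cosh y))).comp x hu
  have hF := harc.const_mul 4
  refine HasDerivAt.congr_deriv hF ?_
  have hid : (Real.cosh y)^2 - (Real.sinh y)^2 = 1 := Real.cosh_sq_sub_sinh_sq y
  have h2y : x*k = 2*y := by rw [hy]; ring
  have hch2 : Real.cosh (x*k) = 2*(Real.cosh y)^2 - 1 := by
    rw [h2y, Real.cosh_two_mul]; linarith
  have hD : 0 < a * Real.cosh (x*k) - b := by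
    nlinarith [Real.one_le_cosh (x*k)]
  rw [hch2] at hD ⊢
  set s := Real.sinh y with hsdef
  set ch := Real.cosh y with hchdef
  clear_value s ch
  have hs2 : s^2 = ch^2 - 1 := by linarith
  subst hkg
  field_simp
  have hD' : a * (ch ^ 2 * 2 - 1) - b ≠ 0 := by rw [mul_comm (ch^2) 2]; exact hD.ne'
  rw [eq_div_iff hD']
  linear_combination (-4*g^2*(a-b)*2*a*ch^2) * hs2 + (-4*g^2*(a-b)*s^2) * hg2

lemma hasDerivAt_G (a b k g : ℝ) (ha : 0 < a) (hb : |b| < a)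
    (hg2 : g^2 * (a - b) = a + b) (hkg : k = 2*g*(a-b)) (x : ℝ) :
    HasDerivAt (fun x => 4*a*k * (Real.sinh (x*k) / (a * Real.cosh (x*k) - b))
        + 4*b*(4 * Real.arctan (g * (Real.sinh (x*k/2) / Real.cosh (x*k/2)))))
      ((k^2 / (a * Real.cosh (x*k) - b))^2) x := by
  have hb1 : -a < b := (abs_lt.1 hb).1
  have hb2 : b < a := (abs_lt.1 hb).2
  have hD : 0 < a * Real.cosh (x*k) - b := by nlinarith [Real.one_le_cosh (x*k)]
  have hlin : HasDerivAt (fun x : ℝ => x*k) k x := by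
    simpa using (hasDerivAt_id x).mul_const k
  have hS : HasDerivAt (fun x : ℝ => Real.sinh (x*k)) (Real.cosh (x*k) * k) x :=
    by have := (Real.hasDerivAt_sinh (x*k)).comp x hlin; exact this
  have hC : HasDerivAt (fun x : ℝ => a * Real.cosh (x*k) - b)
      (a * (Real.sinh (x*k) * k)) x :=
    by have := ((((Real.hasDerivAt_cosh (x*k)).comp x hlin)).const_mul a).sub_const b; exact this
  have hq := (hS.div hC (ne_of_gt hD)).const_mul (4*a*k)
  have hF := (hasDerivAt_F a b k g ha hb hg2 hkg x).const_mul (4*b)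
  have := hq.add hF
  refine HasDerivAt.congr_deriv this ?_
  have hk2 : k^2 = 4*(a^2 - b^2) := by
    rw [hkg]; linear_combination (4*(a-b))*hg2
  set S := Real.sinh (x*k) with hSdef
  set C := Real.cosh (x*k) with hCdef
  have hid : C^2 - S^2 = 1 := Real.cosh_sq_sub_sinh_sq (x*k)
  have hS2 : S^2 = C^2 - 1 := by linarith
  clear_value S C
  field_simp

  linear_combination (-4*a^2*k^2) * hS2 + (-k^2) * hk2

lemma mul_half_tendsto (k : ℝ) (hk : 0 < k) : Tendsto (fun x : ℝ => x*k/2) atTop atTop := by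
  have := Filter.tendsto_id.atTop_mul_const (half_pos hk) (f := fun x : ℝ => x)
  refine this.congr (fun x => by ring)

lemma mul_half_tendsto_bot (k : ℝ) (hk : 0 < k) : Tendsto (fun x : ℝ => x*k/2) atBot atBot := by
  have := Filter.tendsto_id.atBot_mul_const (half_pos hk) (f := fun x : ℝ => x)
  refine this.congr (fun x => by ring)

lemma mul_tendsto (k : ℝ) (hk : 0 < k) : Tendsto (fun x : ℝ => x*k) atTop atTop := by
  have := Filter.tendsto_id.atTop_mul_const hk (f := fun x : ℝ => x)
  exact this

lemma mul_tendsto_bot (k : ℝ) (hk : 0 < k) : Tendsto (fun x : ℝ => x*k) atBot atBot := by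
  exact Filter.tendsto_id.atBot_mul_const hk (f := fun x : ℝ => x)

lemma F_tendsto_atTop (k g : ℝ) (hk : 0 < k) :
    Tendsto (fun x => 4 * Real.arctan (g * (Real.sinh (x*k/2) / Real.cosh (x*k/2))))
      atTop (nhds (4 * Real.arctan g)) := by
  have h1 : Tendsto (fun x : ℝ => Real.sinh (x*k/2) / Real.cosh (x*k/2)) atTop (nhds 1) :=
    tanh_tendsto_atTop.comp (mul_half_tendsto k hk)
  have h2 : Continuous (fun v : ℝ => 4 * Real.arctan (g * v)) := by
    continuity
  have := (h2.tendsto 1).comp h1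
  simpa [Function.comp_def] using this

lemma F_tendsto_atBot (k g : ℝ) (hk : 0 < k) :
    Tendsto (fun x => 4 * Real.arctan (g * (Real.sinh (x*k/2) / Real.cosh (x*k/2))))
      atBot (nhds (-(4 * Real.arctan g))) := by
  have h1 : Tendsto (fun x : ℝ => Real.sinh (x*k/2) / Real.cosh (x*k/2)) atBot (nhds (-1)) :=
    tanh_tendsto_atBot.comp (mul_half_tendsto_bot k hk)
  have h2 : Continuous (fun v : ℝ => 4 * Real.arctan (g * v)) := by continuity
  have := (h2.tendsto (-1)).comp h1
  simp only [Function.comp_def] at this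
  convert this using 1
  simp [Real.arctan_neg]

lemma sinh_div_tendsto_atTop (a b k : ℝ) (ha : 0 < a) (hb : |b| < a) (hk : 0 < k) :
    Tendsto (fun x => Real.sinh (x*k) / (a * Real.cosh (x*k) - b)) atTop (nhds (1/a)) := by
  have key : ∀ x : ℝ, Real.sinh (x*k) / (a * Real.cosh (x*k) - b)
      = (Real.sinh (x*k) / Real.cosh (x*k)) / (a - b * (1 / Real.cosh (x*k))) := by
    intro x
    have hch : 0 < Real.cosh (x*k) := Real.cosh_pos (x*k)
    have hD : 0 < a * Real.cosh (x*k) - b := by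
      nlinarith [Real.one_le_cosh (x*k), (abs_lt.1 hb).1, (abs_lt.1 hb).2]
    field_simp
  simp only [key]
  have h1 : Tendsto (fun x : ℝ => Real.sinh (x*k) / Real.cosh (x*k)) atTop (nhds 1) :=
    tanh_tendsto_atTop.comp (mul_tendsto k hk)
  have h2 : Tendsto (fun x : ℝ => a - b * (1 / Real.cosh (x*k))) atTop (nhds a) := by
    have := (inv_cosh_tendsto_atTop.comp (mul_tendsto k hk)).const_mul b
    simpa using tendsto_const_nhds.sub this
  have := h1.div h2 (ne_of_gt ha)
  simpa [Pi.div_def] using this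

lemma sinh_div_tendsto_atBot (a b k : ℝ) (ha : 0 < a) (hb : |b| < a) (hk : 0 < k) :
    Tendsto (fun x => Real.sinh (x*k) / (a * Real.cosh (x*k) - b)) atBot (nhds (-(1/a))) := by
  have key : ∀ x : ℝ, Real.sinh (x*k) / (a * Real.cosh (x*k) - b)
      = (Real.sinh (x*k) / Real.cosh (x*k)) / (a - b * (1 / Real.cosh (x*k))) := by
    intro x
    have hch : 0 < Real.cosh (x*k) := Real.cosh_pos (x*k)
    have hD : 0 < a * Real.cosh (x*k) - b := by
      nlinarith [Real.one_le_cosh (x*k), (abs_lt.1 hb).1, (abs_lt.1 hb).2]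
    field_simp
  simp only [key]
  have h1 : Tendsto (fun x : ℝ => Real.sinh (x*k) / Real.cosh (x*k)) atBot (nhds (-1)) :=
    tanh_tendsto_atBot.comp (mul_tendsto_bot k hk)
  have h2 : Tendsto (fun x : ℝ => a - b * (1 / Real.cosh (x*k))) atBot (nhds a) := by
    have := (inv_cosh_tendsto_atBot.comp (mul_tendsto_bot k hk)).const_mul b
    simpa using tendsto_const_nhds.sub this
  have := h1.div h2 (ne_of_gt ha)
  simpa [neg_div, Pi.div_def] using this


set_option maxHeartbeats 1000000 in
/-- the momentum of the soliton profile is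
`P(φ_{ω,c}) = (1/2)Im∫ φ_{ω,c}·conj(∂_x φ_{ω,c}) = √(4ω - c²)`. -/
theorem stmt12 (ω c : ℝ) (hω : 0 < ω)
    (hc1 : -2 * Real.sqrt ω < c) (hc2 : c < 2 * Real.sqrt ω) :
    (1 / 2) * (∫ x, (solProfile ω c x
        * (starRingEnd ℂ) (deriv (solProfile ω c) x)).im)
      = Real.sqrt (4 * ω - c ^ 2) := by
  set a := Real.sqrt ω with hadef
  have ha : 0 < a := Real.sqrt_pos.2 hω
  have ha2 : a^2 = ω := Real.sq_sqrt hω.le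
  set b := c/2 with hbdef
  have hb2 : b < a := by rw [hbdef]; linarith
  have hb1 : -a < b := by rw [hbdef]; linarith
  have hb : |b| < a := abs_lt.2 ⟨hb1, hb2⟩
  have hb4 : 4*b^2 = c^2 := by rw [hbdef]; ring
  have hK : 0 < 4*ω - c^2 := by nlinarith
  set k := Real.sqrt (4*ω - c^2) with hkdef
  have hk : 0 < k := Real.sqrt_pos.2 hK
  have hk2 : k^2 = 4*ω - c^2 := Real.sq_sqrt hK.le
  set g := Real.sqrt ((a+b)/(a-b)) with hgdef
  have hg2' : g^2 = (a+b)/(a-b) :=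
    Real.sq_sqrt (div_nonneg (by linarith) (by linarith))
  have hg2 : g^2 * (a-b) = a+b := by
    rw [hg2', div_mul_cancel₀]
    exact (show (0:ℝ) < a - b by linarith).ne'
  have hg0 : 0 ≤ g := Real.sqrt_nonneg _
  have hkg : k = 2*g*(a-b) := by
    have h1 : k^2 = (2*g*(a-b))^2 := by
      rw [hk2]; linear_combination (-(4*(a-b)))*hg2 + (-4)*ha2 + hb4
    calc k = Real.sqrt (k^2) := (Real.sqrt_sq hk.le).symm
    _ = Real.sqrt ((2*g*(a-b))^2) := by rw [h1]
    _ = 2*g*(a-b) := Real.sqrt_sq (by nlinarith)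
  set f2 : ℝ → ℝ := fun x => k^2 / (a * Real.cosh (x*k) - b) with hf2def
  set f4 : ℝ → ℝ := fun x => (k^2 / (a * Real.cosh (x*k) - b))^2 with hf4def
  have hD : ∀ x : ℝ, 0 < a * Real.cosh (x*k) - b := by
    intro x; nlinarith [Real.one_le_cosh (x*k)]
  -- varphi squared equals f2
  have hphi2 : ∀ x : ℝ, varphi ω c x ^ 2 = f2 x := by
    intro x
    have hh : Real.sqrt ω / (4*ω - c^2)
          * (Real.cosh (x * Real.sqrt (4*ω - c^2)) - c/(2*Real.sqrt ω))
        = (a * Real.cosh (x*k) - b) / k^2 := by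
      rw [← hadef, ← hkdef, ← hk2, hbdef]
      field_simp
    have hpos : 0 < (a * Real.cosh (x*k) - b) / k^2 := div_pos (hD x) (by positivity)
    rw [show varphi ω c x = ((a * Real.cosh (x*k) - b) / k^2) ^ (-(1/2:ℝ)) from by
      unfold varphi; rw [hh]]
    rw [← Real.rpow_natCast (((a * Real.cosh (x*k) - b) / k^2) ^ (-(1/2:ℝ))) 2,
      ← Real.rpow_mul hpos.le]
    norm_num
    rw [Real.rpow_neg_one, hf2def]
    simp [inv_div]
  have hphi4 : ∀ x : ℝ, varphi ω c x ^ 4 = f4 x := by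
    intro x
    have : varphi ω c x ^ 4 = (varphi ω c x ^ 2)^2 := by ring
    rw [this, hphi2, hf4def]
  -- continuity
  have hcontf2 : Continuous f2 := by
    apply continuous_const.div
    · exact (continuous_const.mul (Real.continuous_cosh.comp (continuous_id.mul continuous_const))).sub continuous_const
    · exact fun x => ne_of_gt (hD x)
  have hcontf4 : Continuous f4 := hcontf2.pow 2
  -- antiderivatives
  set F : ℝ → ℝ := fun x => 4 * Real.arctan (g * (Real.sinh (x*k/2) / Real.cosh (x*k/2))) with hFdef
  set G : ℝ → ℝ := fun x => 4*a*k * (Real.sinh (x*k) / (a * Real.cosh (x*k) - b))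
      + 4*b*(4 * Real.arctan (g * (Real.sinh (x*k/2) / Real.cosh (x*k/2)))) with hGdef
  have hFderiv : ∀ x, HasDerivAt F (f2 x) x := fun x => hasDerivAt_F a b k g ha hb hg2 hkg x
  have hGderiv : ∀ x, HasDerivAt G (f4 x) x := fun x => hasDerivAt_G a b k g ha hb hg2 hkg x
  have hFtop : Tendsto F atTop (nhds (4 * Real.arctan g)) := F_tendsto_atTop k g hk
  have hFbot : Tendsto F atBot (nhds (-(4 * Real.arctan g))) := F_tendsto_atBot k g hk
  have hGtop : Tendsto G atTop (nhds (4*a*k * (1/a) + 4*b*(4 * Real.arctan g))) := by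
    exact ((sinh_div_tendsto_atTop a b k ha hb hk).const_mul (4*a*k)).add
      ((F_tendsto_atTop k g hk).const_mul (4*b))
  have hGbot : Tendsto G atBot (nhds (4*a*k * (-(1/a)) + 4*b*(-(4 * Real.arctan g)))) := by
    exact ((sinh_div_tendsto_atBot a b k ha hb hk).const_mul (4*a*k)).add
      ((F_tendsto_atBot k g hk).const_mul (4*b))
  -- integrability
  have heven2 : ∀ x : ℝ, f2 (-x) = f2 x := by
    intro x; rw [hf2def]; simp only []
    have : (-x)*k = -(x*k) := by ring
    rw [this, Real.cosh_neg]
  have heven4 : ∀ x : ℝ, f4 (-x) = f4 x := by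
    intro x; rw [hf4def]; simp only []
    have : (-x)*k = -(x*k) := by ring
    rw [this, Real.cosh_neg]
  have hint2 : Integrable f2 := by
    apply integrable_of_even heven2 _ hcontf2
    exact integrableOn_Ioi_deriv_of_nonneg' (fun x _ => hFderiv x)
      (fun x _ => le_of_lt (div_pos (by positivity) (hD x))) hFtop
  have hint4 : Integrable f4 := by
    apply integrable_of_even heven4 _ hcontf4
    exact integrableOn_Ioi_deriv_of_nonneg' (fun x _ => hGderiv x)
      (fun x _ => sq_nonneg _) hGtop
  -- integral values
  have hI2 : ∫ x, f2 x = 8 * Real.arctan g := by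
    rw [MeasureTheory.integral_of_hasDerivAt_of_tendsto hFderiv hint2 hFbot hFtop]
    ring
  have hI4 : ∫ x, f4 x = 8*k + 32*b*Real.arctan g := by
    rw [MeasureTheory.integral_of_hasDerivAt_of_tendsto hGderiv hint4 hGbot hGtop]
    field_simp
    ring
  -- integrability of varphi^2
  have hfun2 : (fun x => varphi ω c x ^ 2) = f2 := funext hphi2
  have hintphi2 : Integrable (fun x => varphi ω c x ^ 2) := hfun2 ▸ hint2
  -- derivative of the phase integral
  have hPhi : ∀ x : ℝ, HasDerivAt (fun y => ∫ ξ in Set.Iic y, varphi ω c ξ ^ 2)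
      (varphi ω c x ^ 2) x := by
    intro x
    have heq : (fun y => ∫ ξ in Set.Iic y, varphi ω c ξ ^ 2)
        = fun y => (∫ ξ in Set.Iic (0:ℝ), varphi ω c ξ ^ 2)
            + ∫ ξ in (0:ℝ)..y, varphi ω c ξ ^ 2 := by
      funext y
      rw [← intervalIntegral.integral_Iic_sub_Iic hintphi2.integrableOn hintphi2.integrableOn]
      ring
    rw [heq]
    have h0 := intervalIntegral.integral_hasDerivAt_right
      (hintphi2.intervalIntegrable (a := 0) (b := x))
      ((hfun2 ▸ hcontf2).stronglyMeasurableAtFilter _ _)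
      ((hfun2 ▸ hcontf2).continuousAt)
    simpa using (h0.const_add (∫ ξ in Set.Iic (0:ℝ), varphi ω c ξ ^ 2))
  -- differentiability of varphi
  have hphidiff : ∀ x : ℝ, DifferentiableAt ℝ (fun y => varphi ω c y) x := by
    intro x
    have hbase : DifferentiableAt ℝ (fun y : ℝ => Real.sqrt ω / (4*ω - c^2)
        * (Real.cosh (y * Real.sqrt (4*ω - c^2)) - c/(2*Real.sqrt ω))) x := by
      apply DifferentiableAt.const_mul
      apply DifferentiableAt.sub_const
      exact (Real.differentiable_cosh _).comp x ((differentiable_id.mul_const _) x)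
    have hh : Real.sqrt ω / (4*ω - c^2)
          * (Real.cosh (x * Real.sqrt (4*ω - c^2)) - c/(2*Real.sqrt ω))
        = (a * Real.cosh (x*k) - b) / k^2 := by
      rw [← hadef, ← hkdef, ← hk2, hbdef]
      field_simp
    have hne : Real.sqrt ω / (4*ω - c^2)
        * (Real.cosh (x * Real.sqrt (4*ω - c^2)) - c/(2*Real.sqrt ω)) ≠ 0 := by
      rw [hh]
      exact ne_of_gt (div_pos (hD x) (by positivity))
    exact hbase.rpow_const (Or.inl hne)
  -- the phase function
  set θ : ℝ → ℝ := fun y => (c/2)*y - (1/4) * ∫ ξ in Set.Iic y, varphi ω c ξ ^ 2 with hθdef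
  have hsolfun : solProfile ω c = fun y => ((varphi ω c y : ℝ) : ℂ)
      * Complex.exp (Complex.I * ((θ y : ℝ) : ℂ)) := rfl
  -- pointwise computation of the integrand
  have him : ∀ x : ℝ, (solProfile ω c x
      * (starRingEnd ℂ) (deriv (solProfile ω c) x)).im = -b * f2 x + (1/4) * f4 x := by
    intro x
    have hθd : HasDerivAt θ (c/2 - varphi ω c x ^ 2/4) x := by
      have h1 : HasDerivAt (fun y : ℝ => (c/2)*y) (c/2) x := by
        simpa using (hasDerivAt_id x).const_mul (c/2)
      have h2 := (hPhi x).const_mul (1/4:ℝ)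
      have := h1.sub h2
      refine HasDerivAt.congr_deriv this ?_
      ring
    have hϕd := (hphidiff x).hasDerivAt
    set dphi := deriv (fun y => varphi ω c y) x with hdphidef
    have h1 : HasDerivAt (fun y => ((varphi ω c y : ℝ) : ℂ)) ((dphi : ℝ) : ℂ) x :=
      hϕd.ofReal_comp
    have h2 : HasDerivAt (fun y => ((θ y : ℝ) : ℂ)) (((c/2 - varphi ω c x ^ 2/4 : ℝ)) : ℂ) x :=
      hθd.ofReal_comp
    have h3 := h2.const_mul Complex.I
    have h4 := h3.cexp
    have h5 := h1.mul h4
    have hd : deriv (solProfile ω c) x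
        = ((dphi : ℝ) : ℂ) * Complex.exp (Complex.I * ((θ x : ℝ) : ℂ))
          + ((varphi ω c x : ℝ) : ℂ) * (Complex.exp (Complex.I * ((θ x : ℝ) : ℂ))
            * (Complex.I * ((c/2 - varphi ω c x ^ 2/4 : ℝ) : ℂ))) := by
      rw [hsolfun]
      exact h5.deriv
    set E := Complex.exp (Complex.I * ((θ x : ℝ) : ℂ)) with hEdef
    have hconjE : (starRingEnd ℂ) E = Complex.exp (-(Complex.I * ((θ x : ℝ) : ℂ))) := by
      rw [hEdef, ← Complex.exp_conj]
      congr 1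
      simp [Complex.conj_I]
    have hE1 : E * (starRingEnd ℂ) E = 1 := by
      rw [hconjE, hEdef, ← Complex.exp_add]
      simp
    rw [hd, hsolfun]
    have hexpand : ((varphi ω c x : ℝ) : ℂ) * E
        * (starRingEnd ℂ) (((dphi : ℝ) : ℂ) * E + ((varphi ω c x : ℝ) : ℂ)
            * (E * (Complex.I * ((c/2 - varphi ω c x ^ 2/4 : ℝ) : ℂ))))
        = (((varphi ω c x * dphi : ℝ) : ℂ)
            - Complex.I * ((varphi ω c x ^ 2 * (c/2 - varphi ω c x ^ 2/4) : ℝ) : ℂ))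
          * (E * (starRingEnd ℂ) E) := by
      simp only [map_add, map_mul, Complex.conj_I, Complex.conj_ofReal]
      push_cast
      ring
    rw [hexpand, hE1, mul_one]
    have haux : ∀ r s : ℝ, ((r:ℂ) - Complex.I * (s:ℂ)).im = -s := by
      intro r s; simp
    rw [haux]
    have h2x := hphi2 x
    have h4x := hphi4 x
    rw [hbdef]
    linear_combination (-(c/2))*h2x + (1/4:ℝ)*h4x
  -- assembling the integral
  have hIm : (∫ x, (solProfile ω c x * (starRingEnd ℂ) (deriv (solProfile ω c) x)).im)
      = ∫ x, (-b * f2 x + (1/4) * f4 x) :=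
    MeasureTheory.integral_congr_ae (Filter.Eventually.of_forall him)
  rw [hIm, MeasureTheory.integral_add (hint2.const_mul (-b)) (hint4.const_mul (1/4)),
    MeasureTheory.integral_const_mul, MeasureTheory.integral_const_mul, hI2, hI4]
  ring
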